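/- Let n ≥ 1 and W ≥ 1 be integers, and let A and B be n×n matrices with natural-number entries all bounded by W. If λ is an eigenvalue of A and μ is an eigenvalue of B with λ ≠ μ, then |λ − μ| ≥ (2 · (2n)^{n+2} · ((2⌈√n⌉ W)^{2n} + 1)^{2n})^{−1}. In particular, if the spectral radii of A and B are distinct, they differ by at least this quantity. -/

import Mathlib

set_option maxHeartbeats 1600000

open Matrix Polynomial Kronecker

noncomputable def Complex.abs : AbsoluteValue ℂ ℝ := NormedField.toAbsoluteValue ℂ

theorem Complex.norm_eq_abs (z : ℂ) : ‖z‖ = Complex.abs z := rfl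

@[simp] theorem Complex.abs_ofReal (r : ℝ) : Complex.abs (r : ℂ) = |r| := by
  rw [← Complex.norm_eq_abs, Complex.norm_real, Real.norm_eq_abs]

@[simp] theorem Complex.abs_intCast (n : ℤ) : Complex.abs (n : ℂ) = |(n : ℝ)| := by
  rw [← Complex.norm_eq_abs, Complex.norm_intCast]

lemma multiset_prod_le_pow_card (c : ℝ) (s : Multiset ℝ)
    (h0 : ∀ x ∈ s, 0 ≤ x) (hc : ∀ x ∈ s, x ≤ c) : s.prod ≤ c ^ Multiset.card s := by
  induction s using Multiset.induction with
  | empty => simp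
  | cons a t ih =>
    simp only [Multiset.prod_cons, Multiset.card_cons, pow_succ]
    have ht : t.prod ≤ c ^ Multiset.card t :=
      ih (fun x hx => h0 x (Multiset.mem_cons_of_mem hx)) (fun x hx => hc x (Multiset.mem_cons_of_mem hx))
    have h0t : 0 ≤ t.prod := Multiset.prod_nonneg (fun x hx => h0 x (Multiset.mem_cons_of_mem hx))
    have ha0 : 0 ≤ a := h0 a (Multiset.mem_cons_self a t)
    have hac : a ≤ c := hc a (Multiset.mem_cons_self a t)
    calc a * t.prod ≤ c * (c ^ Multiset.card t) := mul_le_mul hac ht h0t (ha0.trans hac)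
      _ = c ^ Multiset.card t * c := mul_comm _ _

lemma small_root_sep {N : ℕ} (h : Polynomial ℤ) (hm : h.Monic) (hd : h.natDegree = N)
    (c : ℝ) (hc1 : 1 ≤ c)
    (hroots : ∀ w : ℂ, (h.map (Int.castRingHom ℂ)).IsRoot w → Complex.abs w ≤ c)
    (z : ℂ) (hz : (h.map (Int.castRingHom ℂ)).IsRoot z) (hz0 : z ≠ 0) :
    (c ^ (N - 1))⁻¹ ≤ Complex.abs z := by
  set H : Polynomial ℂ := h.map (Int.castRingHom ℂ) with hH
  have hHm : H.Monic := hm.map _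
  have hHne : H ≠ 0 := hHm.ne_zero
  have hHd : H.natDegree = N := by rw [hH, hm.natDegree_map]; exact hd
  -- roots
  set R : Multiset ℂ := H.roots with hR
  have hsplit : H = (R.map (fun r => X - C r)).prod := by
    simpa using (IsAlgClosed.splits H).eq_prod_roots_of_monic hHm
  have hzR : z ∈ R := by rw [hR, Polynomial.mem_roots hHne]; exact hz
  -- split off zeros
  set k : ℕ := R.count 0 with hk
  set R' : Multiset ℂ := R.filter (fun r => ¬ r = 0) with hR'
  have hRsplit : R.filter (fun r => r = 0) + R' = R := Multiset.filter_add_not _ _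
  have hfz : R.filter (fun r => r = 0) = Multiset.replicate k 0 := by
    rw [hk]; exact Multiset.filter_eq' R 0
  set G : Polynomial ℂ := (R'.map (fun r => X - C r)).prod with hG
  have hHXk : H = X ^ k * G := by
    rw [hsplit, ← hRsplit, Multiset.map_add, Multiset.prod_add, hfz]
    congr 1
    simp [Multiset.map_replicate, Multiset.prod_replicate]
  -- coefficient k
  have hcoeff : H.coeff k = G.eval 0 := by
    rw [hHXk, ← Polynomial.coeff_zero_eq_eval_zero]
    simpa using Polynomial.coeff_X_pow_mul G k 0
  have hGeval : G.eval 0 = (R'.map (fun r => -r)).prod := by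
    rw [hG, Polynomial.eval_multiset_prod, Multiset.map_map]
    simp
  have hG0 : G.eval 0 ≠ 0 := by
    rw [hGeval]
    refine Multiset.prod_ne_zero ?_
    intro h0
    rw [Multiset.mem_map] at h0
    obtain ⟨r, hrm, hr0⟩ := h0
    rw [hR', Multiset.mem_filter] at hrm
    exact hrm.2 (by simpa using hr0.symm)
  -- integer coefficient
  have hint : H.coeff k = ((h.coeff k : ℤ) : ℂ) := by rw [hH, Polynomial.coeff_map]; rfl
  have hck : h.coeff k ≠ 0 := by
    intro h0; exact hG0 (by rw [← hcoeff, hint, h0]; simp)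
  have h1le : (1 : ℝ) ≤ Complex.abs (H.coeff k) := by
    rw [hint, Complex.abs_intCast]
    exact_mod_cast Int.one_le_abs hck
  -- product of absolute values
  have hprodabs : Complex.abs (H.coeff k) = ((R'.map Complex.abs).prod) := by
    rw [hcoeff, hGeval, map_multiset_prod, Multiset.map_map]
    congr 1
    refine Multiset.map_congr rfl fun r _ => ?_
    simp
  have hzR' : z ∈ R' := by rw [hR', Multiset.mem_filter]; exact ⟨hzR, hz0⟩
  set R'' : Multiset ℂ := R'.erase z with hR''
  have hcons : z ::ₘ R'' = R' := Multiset.cons_erase hzR'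
  have hprodsplit : ((R'.map Complex.abs).prod) = Complex.abs z * ((R''.map Complex.abs).prod) := by
    rw [← hcons, Multiset.map_cons, Multiset.prod_cons]
  have hcard : Multiset.card R'' ≤ N - 1 := by
    have h1 : Multiset.card R' ≤ N := by
      calc Multiset.card R' ≤ Multiset.card R := Multiset.card_le_card (Multiset.filter_le _ _)
        _ ≤ N := by rw [← hHd]; exact Polynomial.card_roots' H
    have h2 : Multiset.card R'' = Multiset.card R' - 1 := by
      rw [hR'', Multiset.card_erase_of_mem hzR', Nat.pred_eq_sub_one]
    omega
  have hbd : ((R''.map Complex.abs).prod) ≤ c ^ (N - 1) := by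
    calc ((R''.map Complex.abs).prod) ≤ c ^ Multiset.card (R''.map Complex.abs) := by
          refine multiset_prod_le_pow_card c _ ?_ ?_
          · intro x hx
            obtain ⟨r, _, rfl⟩ := Multiset.mem_map.1 hx
            exact AbsoluteValue.nonneg _ _
          · intro x hx
            obtain ⟨r, hr, rfl⟩ := Multiset.mem_map.1 hx
            refine hroots r ?_
            have hrR : r ∈ R := Multiset.mem_of_le (Multiset.filter_le _ _) (Multiset.mem_of_mem_erase hr)
            rw [hR, Polynomial.mem_roots hHne] at hrR
            exact hrR
      _ ≤ c ^ (N - 1) := by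
          rw [Multiset.card_map]
          exact pow_le_pow_right₀ hc1 hcard
  have hpos : 0 < c ^ (N - 1) := lt_of_lt_of_le zero_lt_one (one_le_pow₀ hc1)
  rw [inv_eq_one_div, div_le_iff₀ hpos]
  have habs0 : 0 ≤ Complex.abs z := AbsoluteValue.nonneg _ _
  have hRpos : 0 ≤ (R''.map Complex.abs).prod := Multiset.prod_nonneg (by
    intro x hx; obtain ⟨r, _, rfl⟩ := Multiset.mem_map.1 hx; exact AbsoluteValue.nonneg _ _)
  calc (1:ℝ) ≤ Complex.abs (H.coeff k) := h1le
    _ = Complex.abs z * ((R''.map Complex.abs).prod) := by rw [hprodabs, hprodsplit]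
    _ ≤ Complex.abs z * c ^ (N - 1) := mul_le_mul_of_nonneg_left hbd habs0

lemma eval_cp' {m : Type*} [Fintype m] [DecidableEq m] {R : Type*} [CommRing R]
    (M : Matrix m m R) (x : R) :
    (M.charpoly).eval x = (x • (1 : Matrix m m R) - M).det := by
  rw [Matrix.charpoly, ← Polynomial.coe_evalRingHom, RingHom.map_det]
  congr 1
  ext i j
  by_cases h : i = j <;>
    simp [h, Matrix.charmatrix_apply, Matrix.one_apply, Matrix.diagonal_apply]

lemma exists_eigenvec {m : Type*} [Fintype m] [DecidableEq m] (N : Matrix m m ℂ) (z : ℂ)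
    (h : N.charpoly.IsRoot z) : ∃ v, v ≠ 0 ∧ N *ᵥ v = z • v := by
  have hd : (z • (1 : Matrix m m ℂ) - N).det = 0 := by
    rw [← eval_cp']; exact h
  obtain ⟨v, hv0, hv⟩ := (Matrix.exists_mulVec_eq_zero_iff).2 hd
  refine ⟨v, hv0, ?_⟩
  rw [Matrix.sub_mulVec, Matrix.smul_mulVec, Matrix.one_mulVec, sub_eq_zero] at hv
  exact hv.symm

lemma kron_eig {m : Type*} [Fintype m] [DecidableEq m] (A B : Matrix m m ℂ) (u v : m → ℂ)
    (lam mu : ℂ) (hu : A *ᵥ u = lam • u) (hv : B *ᵥ v = mu • v) :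
    (A ⊗ₖ (1 : Matrix m m ℂ) - (1 : Matrix m m ℂ) ⊗ₖ B) *ᵥ (fun p => u p.1 * v p.2)
      = (lam - mu) • (fun p => u p.1 * v p.2) := by
  funext p
  obtain ⟨i, j⟩ := p
  have h1 : ∑ q : m × m, (A ⊗ₖ (1 : Matrix m m ℂ)) (i,j) q * (u q.1 * v q.2)
      = (∑ k, A i k * u k) * v j := by
    rw [Fintype.sum_prod_type, Finset.sum_mul]
    refine Finset.sum_congr rfl fun k _ => ?_
    simp [Matrix.kroneckerMap_apply, Matrix.one_apply, Finset.sum_ite_eq', mul_comm, mul_assoc,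
      mul_left_comm]
  have h2 : ∑ q : m × m, ((1 : Matrix m m ℂ) ⊗ₖ B) (i,j) q * (u q.1 * v q.2)
      = u i * ∑ l, B j l * v l := by
    rw [Fintype.sum_prod_type, Finset.mul_sum]
    rw [Finset.sum_eq_single i]
    · refine Finset.sum_congr rfl fun l _ => ?_
      simp [Matrix.kroneckerMap_apply, mul_comm, mul_assoc, mul_left_comm]
    · intro k _ hk
      simp [Matrix.kroneckerMap_apply, Matrix.one_apply, Ne.symm hk]
    · simp
  have hu' : ∑ k, A i k * u k = lam * u i := by
    have := congrFun hu i; simpa [Matrix.mulVec, dotProduct] using this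
  have hv' : ∑ l, B j l * v l = mu * v j := by
    have := congrFun hv j; simpa [Matrix.mulVec, dotProduct] using this
  simp only [Matrix.mulVec, dotProduct, Matrix.sub_apply, sub_mul, Finset.sum_sub_distrib]
  rw [h1, h2, hu', hv']
  simp only [Pi.smul_apply, smul_eq_mul]
  ring

-- the key integer matrix whose charpoly kills lam - mu
lemma kron_root (n : ℕ) (A B : Matrix (Fin n) (Fin n) ℕ) (lam mu : ℂ)
    (hlam : ((A.map (Nat.cast : ℕ → ℂ)).charpoly).IsRoot lam)
    (hmu : ((B.map (Nat.cast : ℕ → ℂ)).charpoly).IsRoot mu) :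
    ∃ Mz : Matrix (Fin n × Fin n) (Fin n × Fin n) ℤ,
      (∀ p q, Mz p q = (if p.2 = q.2 then (A p.1 q.1 : ℤ) else 0)
          - (if p.1 = q.1 then (B p.2 q.2 : ℤ) else 0)) ∧
      ((Mz.charpoly).map (Int.castRingHom ℂ)).IsRoot (lam - mu) := by
  set Az : Matrix (Fin n) (Fin n) ℤ := A.map (Nat.cast : ℕ → ℤ) with hAz
  set Bz : Matrix (Fin n) (Fin n) ℤ := B.map (Nat.cast : ℕ → ℤ) with hBz
  set Mz : Matrix (Fin n × Fin n) (Fin n × Fin n) ℤ :=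
    Az ⊗ₖ (1 : Matrix (Fin n) (Fin n) ℤ) - (1 : Matrix (Fin n) (Fin n) ℤ) ⊗ₖ Bz with hMz
  refine ⟨Mz, ?_, ?_⟩
  · rintro ⟨i, j⟩ ⟨k, l⟩
    simp only [hMz, Matrix.sub_apply, Matrix.kroneckerMap_apply, hAz, hBz, Matrix.map_apply,
      Matrix.one_apply]
    by_cases h1 : j = l <;> by_cases h2 : i = k <;> simp [h1, h2, mul_comm]
  · -- map to ℂ
    have hmap : (Mz.charpoly).map (Int.castRingHom ℂ)
        = (Mz.map (Int.castRingHom ℂ)).charpoly := (Matrix.charpoly_map Mz _).symm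
    have hMc : Mz.map (Int.castRingHom ℂ)
        = (A.map (Nat.cast : ℕ → ℂ)) ⊗ₖ (1 : Matrix (Fin n) (Fin n) ℂ)
          - (1 : Matrix (Fin n) (Fin n) ℂ) ⊗ₖ (B.map (Nat.cast : ℕ → ℂ)) := by
      ext p q
      simp only [hMz, Matrix.map_apply, Matrix.sub_apply, Matrix.kroneckerMap_apply, hAz, hBz,
        Matrix.one_apply]
      by_cases h1 : p.2 = q.2 <;> by_cases h2 : p.1 = q.1 <;> push_cast <;> simp [h1, h2]
    rw [hmap, hMc]
    -- eigenvectors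
    obtain ⟨u, hu0, hu⟩ := exists_eigenvec _ lam hlam
    obtain ⟨v, hv0, hv⟩ := exists_eigenvec _ mu hmu
    show Polynomial.IsRoot _ _
    rw [Polynomial.IsRoot, eval_cp']
    rw [← Matrix.exists_mulVec_eq_zero_iff]
    refine ⟨fun p => u p.1 * v p.2, ?_, ?_⟩
    · rcases Function.ne_iff.1 hu0 with ⟨i, hi⟩
      rcases Function.ne_iff.1 hv0 with ⟨j, hj⟩
      intro hzero
      have := congrFun hzero (i, j)
      simp only [Pi.zero_apply] at this hi hj
      exact hi (by
        rcases mul_eq_zero.1 this with h | h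
        · exact h
        · exact absurd h hj)
    · rw [Matrix.sub_mulVec, Matrix.smul_mulVec, Matrix.one_mulVec,
        kron_eig _ _ u v lam mu hu hv, sub_self]

lemma root_bound {m : Type*} [Fintype m] [DecidableEq m] (N : Matrix m m ℂ) (c : ℝ)
    (hc : ∀ i j, Complex.abs (N i j) ≤ c) (z : ℂ) (h : N.charpoly.IsRoot z) :
    Complex.abs z ≤ (Fintype.card m) * c := by
  obtain ⟨v, hv0, hv⟩ := exists_eigenvec N z h
  have : Nonempty m := by
    by_contra hne
    simp only [not_nonempty_iff] at hne
    exact hv0 (funext fun i => absurd (IsEmpty.false i) not_false)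
  obtain ⟨i, -, hi⟩ := Finset.exists_max_image Finset.univ (fun i => Complex.abs (v i))
    ⟨Classical.arbitrary m, Finset.mem_univ _⟩
  have hvi : 0 < Complex.abs (v i) := by
    rcases Function.ne_iff.1 hv0 with ⟨j, hj⟩
    exact lt_of_lt_of_le (by simpa using hj) (hi j (Finset.mem_univ j))
  have h1 : Complex.abs z * Complex.abs (v i) ≤ (Fintype.card m) * c * Complex.abs (v i) := by
    have h2 : z * v i = ∑ j, N i j * v j := by
      have := congrFun hv i
      simpa [Matrix.mulVec, dotProduct, Pi.smul_apply, smul_eq_mul, mul_comm] using this.symm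
    calc Complex.abs z * Complex.abs (v i) = Complex.abs (∑ j, N i j * v j) := by
          rw [← _root_.map_mul, h2]
      _ ≤ ∑ j : m, Complex.abs (N i j) * Complex.abs (v j) := by
          simpa [Complex.norm_eq_abs] using (norm_sum_le Finset.univ (fun j => N i j * v j)).trans (le_of_eq (by simp [Complex.norm_eq_abs]))
      _ ≤ ∑ j : m, c * Complex.abs (v i) := by
          refine Finset.sum_le_sum fun j _ => ?_
          exact mul_le_mul (hc i j) (hi j (Finset.mem_univ j)) (by positivity) (le_trans (by positivity) (hc i j))
      _ = (Fintype.card m) * c * Complex.abs (v i) := by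
          rw [Finset.sum_const, Finset.card_univ]; ring
  exact le_of_mul_le_mul_right h1 hvi

lemma subinv_vec {n : ℕ} (hn : 0 < n) (Mr : Matrix (Fin n) (Fin n) ℝ)
    (h0 : ∀ i j, 0 ≤ Mr i j) (z : ℂ)
    (hz : ((Mr.map (Complex.ofReal : ℝ → ℂ)).charpoly).IsRoot z) :
    ∃ u : Fin n → ℝ, (∀ i, 0 ≤ u i) ∧ (∑ i, u i = 1) ∧
      ∀ i, Complex.abs z * u i ≤ (Mr *ᵥ u) i := by
  have : NeZero n := ⟨hn.ne'⟩
  -- eigenvector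
  have hd : (z • (1 : Matrix (Fin n) (Fin n) ℂ) - Mr.map Complex.ofReal).det = 0 := by
    rw [← eval_cp']; exact hz
  obtain ⟨v, hv0, hv⟩ := (Matrix.exists_mulVec_eq_zero_iff).2 hd
  rw [Matrix.sub_mulVec, Matrix.smul_mulVec, Matrix.one_mulVec, sub_eq_zero] at hv
  -- hv : z • v = (Mr.map ofReal) *ᵥ v
  set a : Fin n → ℝ := fun i => Complex.abs (v i) with ha
  have ha0 : ∀ i, 0 ≤ a i := fun i => AbsoluteValue.nonneg _ _
  have hS : 0 < ∑ i, a i := by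
    rcases Function.ne_iff.1 hv0 with ⟨j, hj⟩
    refine Finset.sum_pos' (fun i _ => ha0 i) ⟨j, Finset.mem_univ j, ?_⟩
    simpa [ha] using hj
  have hsubinv : ∀ i, Complex.abs z * a i ≤ (Mr *ᵥ a) i := by
    intro i
    have h1 : z * v i = ∑ j, (Mr i j : ℂ) * v j := by
      have := congrFun hv i
      simp only [Pi.smul_apply, smul_eq_mul] at this
      rw [this]
      simp [Matrix.mulVec, dotProduct, Matrix.map_apply]
    calc Complex.abs z * a i = Complex.abs (∑ j, (Mr i j : ℂ) * v j) := by
          rw [ha, ← _root_.map_mul, h1]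
      _ ≤ ∑ j, Complex.abs ((Mr i j : ℂ) * v j) := by
          simpa [Complex.norm_eq_abs] using norm_sum_le Finset.univ (fun j => (Mr i j : ℂ) * v j)
      _ = ∑ j, Mr i j * a j := by
          refine Finset.sum_congr rfl fun j _ => ?_
          rw [_root_.map_mul, Complex.abs_ofReal, abs_of_nonneg (h0 i j)]
      _ = (Mr *ᵥ a) i := rfl
  set S := ∑ i, a i with hSdef
  refine ⟨S⁻¹ • a, ?_, ?_, ?_⟩
  · intro i; have := ha0 i; have := hS.le; simp only [Pi.smul_apply, smul_eq_mul]; positivity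
  · simp only [Pi.smul_apply, smul_eq_mul, ← Finset.mul_sum]
    rw [← hSdef, inv_mul_cancel₀ hS.ne']
  · intro i
    rw [Matrix.mulVec_smul]
    simp only [Pi.smul_apply, smul_eq_mul]
    calc Complex.abs z * (S⁻¹ * a i) = S⁻¹ * (Complex.abs z * a i) := by ring
      _ ≤ S⁻¹ * (Mr *ᵥ a) i := by
          refine mul_le_mul_of_nonneg_left (hsubinv i) ?_
          positivity
open Matrix

variable {n : ℕ}

lemma cw_upper (M : Matrix (Fin n) (Fin n) ℝ) (hM : ∀ i j, 0 ≤ M i j)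
    (s : ℝ) (u : Fin n → ℝ) (hu0 : ∀ i, 0 ≤ u i) (hu1 : ∑ i, u i = 1)
    (hsu : ∀ i, s * u i ≤ (M *ᵥ u) i) : s ≤ ∑ i, ∑ j, M i j := by
  have hu_le : ∀ j, u j ≤ 1 := by
    intro j
    rw [← hu1]
    exact Finset.single_le_sum (fun i _ => hu0 i) (Finset.mem_univ j)
  calc s = ∑ i, s * u i := by rw [← Finset.mul_sum, hu1, mul_one]
    _ ≤ ∑ i, (M *ᵥ u) i := Finset.sum_le_sum fun i _ => hsu i
    _ = ∑ i, ∑ j, M i j * u j := rfl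
    _ ≤ ∑ i, ∑ j, M i j := by
        refine Finset.sum_le_sum fun i _ => Finset.sum_le_sum fun j _ => ?_
        calc M i j * u j ≤ M i j * 1 := mul_le_mul_of_nonneg_left (hu_le j) (hM i j)
          _ = M i j := mul_one _

lemma pf_pos (hn : 0 < n) (M : Matrix (Fin n) (Fin n) ℝ) (hpos : ∀ i j, 0 < M i j) :
    ∃ t : ℝ, 0 ≤ t ∧ t ≤ (∑ i, ∑ j, M i j) ∧ (t • (1 : Matrix (Fin n) (Fin n) ℝ) - M).det = 0 ∧
      ∀ s : ℝ, ∀ u : Fin n → ℝ, (∀ i, 0 ≤ u i) → (∑ i, u i = 1) →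
        (∀ i, s * u i ≤ (M *ᵥ u) i) → s ≤ t := by
  have : NeZero n := ⟨hn.ne'⟩
  have hM0 : ∀ i j, 0 ≤ M i j := fun i j => (hpos i j).le
  set Cb : ℝ := ∑ i, ∑ j, M i j with hCb
  have hCb0 : 0 ≤ Cb := Finset.sum_nonneg fun i _ => Finset.sum_nonneg fun j _ => hM0 i j
  set K : Set (ℝ × (Fin n → ℝ)) :=
    {p | p.1 ∈ Set.Icc 0 Cb ∧ (∀ i, 0 ≤ p.2 i) ∧ (∑ i, p.2 i = 1) ∧
      ∀ i, p.1 * p.2 i ≤ (M *ᵥ p.2) i} with hK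
  -- K is compact
  have hKsub : K ⊆ Set.Icc 0 Cb ×ˢ Set.Icc (0 : Fin n → ℝ) 1 := by
    rintro ⟨s, u⟩ ⟨h1, h2, h3, h4⟩
    refine ⟨h1, ?_, ?_⟩
    · rw [Pi.le_def]; intro i; exact h2 i
    · rw [Pi.le_def]
      intro i
      simp only [Pi.one_apply]
      rw [← h3]
      exact Finset.single_le_sum (fun k _ => h2 k) (Finset.mem_univ i)
  have hKclosed : IsClosed K := by
    have c1 : Continuous fun p : ℝ × (Fin n → ℝ) => p.1 := continuous_fst
    have c2 : ∀ i, Continuous fun p : ℝ × (Fin n → ℝ) => p.2 i :=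
      fun i => (continuous_apply i).comp continuous_snd
    have c3 : ∀ i, Continuous fun p : ℝ × (Fin n → ℝ) => (M *ᵥ p.2) i := by
      intro i
      simp only [Matrix.mulVec, dotProduct]
      exact continuous_finset_sum _ fun j _ => (continuous_const.mul (c2 j))
    refine IsClosed.inter ?_ (IsClosed.inter ?_ (IsClosed.inter ?_ ?_))
    · exact IsClosed.preimage c1 isClosed_Icc
    · show IsClosed {p : ℝ × (Fin n → ℝ) | ∀ i, 0 ≤ p.2 i}
      rw [Set.setOf_forall]
      exact isClosed_iInter fun i => isClosed_le continuous_const (c2 i)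
    · exact isClosed_eq (continuous_finset_sum _ fun i _ => c2 i) continuous_const
    · show IsClosed {p : ℝ × (Fin n → ℝ) | ∀ i, p.1 * p.2 i ≤ (M *ᵥ p.2) i}
      rw [Set.setOf_forall]
      exact isClosed_iInter fun i => isClosed_le (c1.mul (c2 i)) (c3 i)
  have hKcompact : IsCompact K :=
    (IsCompact.prod isCompact_Icc isCompact_Icc).of_isClosed_subset hKclosed hKsub
  -- K nonempty
  have hKne : K.Nonempty := by
    refine ⟨(0, fun _ => (n : ℝ)⁻¹), ?_, ?_, ?_, ?_⟩
    · exact ⟨le_refl 0, hCb0⟩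
    · intro i; positivity
    · simp only [Finset.sum_const, Finset.card_univ, Fintype.card_fin, nsmul_eq_mul]
      rw [mul_inv_cancel₀]
      positivity
    · intro i
      rw [zero_mul]
      show (0:ℝ) ≤ ∑ j, M i j * (n : ℝ)⁻¹
      refine Finset.sum_nonneg fun j _ => ?_
      have := hM0 i j
      positivity
  obtain ⟨⟨t, u⟩, hmemK, hmax'⟩ := hKcompact.exists_isMaxOn hKne continuous_fst.continuousOn
  have hmax : ∀ p ∈ K, p.1 ≤ t := fun p hp => hmax' hp
  obtain ⟨htI, hu0, hu1, hsub⟩ := hmemK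
  refine ⟨t, htI.1, htI.2, ?_, ?_⟩
  · -- t is an eigenvalue
    -- first, M *ᵥ u = t • u
    set w : Fin n → ℝ := M *ᵥ u - t • u with hw
    have hw0 : ∀ i, 0 ≤ w i := by
      intro i; simp only [hw, Pi.sub_apply, Pi.smul_apply, smul_eq_mul, sub_nonneg]; exact hsub i
    have hweq : w = 0 := by
      by_contra hwne
      obtain ⟨i0, hi0⟩ : ∃ i0, 0 < w i0 := by
        by_contra hno
        push_neg at hno
        exact hwne (funext fun i => le_antisymm (hno i) (hw0 i))
      -- v := M *ᵥ u is strictly positive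
      obtain ⟨j0, hj0⟩ : ∃ j0, 0 < u j0 := by
        by_contra hno
        push_neg at hno
        have : ∑ i, u i = 0 := Finset.sum_eq_zero fun i _ => le_antisymm (hno i) (hu0 i)
        rw [hu1] at this; norm_num at this
      set v : Fin n → ℝ := M *ᵥ u with hv
      have hvpos : ∀ i, 0 < v i := by
        intro i
        have : M i j0 * u j0 ≤ ∑ j, M i j * u j :=
          Finset.single_le_sum (fun j _ => mul_nonneg (hM0 i j) (hu0 j)) (Finset.mem_univ j0)
        have h2 : 0 < M i j0 * u j0 := mul_pos (hpos i j0) hj0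
        exact lt_of_lt_of_le h2 this
      have hMw : ∀ i, 0 < (M *ᵥ w) i := by
        intro i
        have : M i i0 * w i0 ≤ ∑ j, M i j * w j :=
          Finset.single_le_sum (fun j _ => mul_nonneg (hM0 i j) (hw0 j)) (Finset.mem_univ i0)
        exact lt_of_lt_of_le (mul_pos (hpos i i0) hi0) this
      -- ε
      set ε : ℝ := Finset.univ.inf' (Finset.univ_nonempty) (fun i => (M *ᵥ w) i / v i) with hε
      have hεpos : 0 < ε := by
        rw [hε]
        rw [Finset.lt_inf'_iff]
        intro i _
        exact div_pos (hMw i) (hvpos i)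
      have hεle : ∀ i, ε * v i ≤ (M *ᵥ w) i := by
        intro i
        have h1 : ε ≤ (M *ᵥ w) i / v i := Finset.inf'_le _ (Finset.mem_univ i)
        rw [le_div_iff₀ (hvpos i)] at h1
        linarith [h1]
      -- M *ᵥ v ≥ (t + ε) v
      have hMv : ∀ i, (t + ε) * v i ≤ (M *ᵥ v) i := by
        intro i
        have hexp : M *ᵥ v = M *ᵥ w + t • v := by
          rw [hw, Matrix.mulVec_sub, Matrix.mulVec_smul, ← hv]
          ext i'
          simp only [Pi.add_apply, Pi.sub_apply, Pi.smul_apply]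
          ring
        have := congrFun hexp i
        rw [this]
        simp only [Pi.add_apply, Pi.smul_apply, smul_eq_mul]
        have := hεle i
        linarith
      -- normalize v
      set S : ℝ := ∑ i, v i with hS
      have hSpos : 0 < S := Finset.sum_pos (fun i _ => hvpos i) Finset.univ_nonempty
      have hΔ0 : ∀ i, 0 ≤ (S⁻¹ • v) i := by
        intro i; have := (hvpos i).le; have := hSpos.le
        simp only [Pi.smul_apply, smul_eq_mul]; positivity
      have hΔ1 : ∑ i, (S⁻¹ • v) i = 1 := by
        simp only [Pi.smul_apply, smul_eq_mul, ← Finset.mul_sum]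
        rw [← hS, inv_mul_cancel₀ hSpos.ne']
      have hsubnew : ∀ i, (t + ε) * (S⁻¹ • v) i ≤ (M *ᵥ (S⁻¹ • v)) i := by
        intro i
        have hmvs : M *ᵥ (S⁻¹ • v) = S⁻¹ • (M *ᵥ v) := by
          rw [Matrix.mulVec_smul]
        rw [hmvs]
        simp only [Pi.smul_apply, smul_eq_mul]
        calc (t + ε) * (S⁻¹ * v i) = S⁻¹ * ((t + ε) * v i) := by ring
          _ ≤ S⁻¹ * (M *ᵥ v) i := by
              refine mul_le_mul_of_nonneg_left (hMv i) ?_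
              positivity
      have hcontr : t + ε ≤ t := by
        refine hmax (t + ε, S⁻¹ • v) ?_
        exact ⟨⟨by linarith [htI.1, hεpos], cw_upper M hM0 _ _ hΔ0 hΔ1 hsubnew⟩, hΔ0, hΔ1, hsubnew⟩
      linarith
    -- now the determinant
    have heig : M *ᵥ u = t • u := by
      have := hweq
      rw [hw, sub_eq_zero] at this
      exact this
    rw [← Matrix.exists_mulVec_eq_zero_iff]
    refine ⟨u, ?_, ?_⟩
    · intro h0
      rw [h0] at hu1
      simp at hu1
    · rw [Matrix.sub_mulVec, Matrix.smul_mulVec, Matrix.one_mulVec, heig, sub_self]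
  · -- maximality
    intro s u' hu'0 hu'1 hsu'
    rcases le_or_gt s 0 with hs | hs
    · exact hs.trans htI.1
    · exact hmax (s, u') ⟨⟨hs.le, cw_upper M hM0 s u' hu'0 hu'1 hsu'⟩, hu'0, hu'1, hsu'⟩

lemma pf_nonneg {n : ℕ} (hn : 0 < n) (Mr : Matrix (Fin n) (Fin n) ℝ)
    (h0 : ∀ i j, 0 ≤ Mr i j) :
    ∃ t : ℝ, 0 ≤ t ∧ ((Mr.map (Complex.ofReal : ℝ → ℂ)).charpoly).IsRoot (t : ℂ) ∧
      ∀ z : ℂ, ((Mr.map (Complex.ofReal : ℝ → ℂ)).charpoly).IsRoot z → Complex.abs z ≤ t := by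
  have : NeZero n := ⟨hn.ne'⟩
  set J : Matrix (Fin n) (Fin n) ℝ := Matrix.of (fun _ _ => (1 : ℝ)) with hJ
  set Mm : ℕ → Matrix (Fin n) (Fin n) ℝ := fun m => Mr + (1 / (m + 1 : ℝ)) • J with hMm
  have hMmpos : ∀ m, ∀ i j, 0 < Mm m i j := by
    intro m i j
    simp only [hMm, Matrix.add_apply, Matrix.smul_apply, hJ, Matrix.of_apply, smul_eq_mul, mul_one]
    have h1 : (0:ℝ) < 1 / (m + 1 : ℝ) := by positivity
    linarith [h0 i j]
  choose t ht0 htC htdet htmax using fun m => pf_pos hn (Mm m) (hMmpos m)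
  -- uniform bound
  set C : ℝ := (∑ i, ∑ j, Mr i j) + n ^ 2 with hC
  have htB : ∀ m, t m ∈ Set.Icc (0:ℝ) C := by
    intro m
    refine ⟨ht0 m, le_trans (htC m) ?_⟩
    rw [hC]
    have : ∀ i : Fin n, ∑ j, Mm m i j = (∑ j, Mr i j) + n * (1 / (m + 1 : ℝ)) := by
      intro i
      simp only [hMm, Matrix.add_apply, Matrix.smul_apply, hJ, Matrix.of_apply, smul_eq_mul,
        mul_one, Finset.sum_add_distrib, Finset.sum_const, Finset.card_univ, Fintype.card_fin,
        nsmul_eq_mul]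
    rw [Finset.sum_congr rfl (fun i _ => this i), Finset.sum_add_distrib]
    have h1 : (1 : ℝ) / (m + 1 : ℝ) ≤ 1 := by
      rw [div_le_one (by positivity)]; linarith [Nat.cast_nonneg (α := ℝ) m]
    have h2 : ∑ _i : Fin n, (n : ℝ) * (1 / (m + 1 : ℝ)) ≤ (n:ℝ)^2 := by
      rw [Finset.sum_const, Finset.card_univ, Fintype.card_fin, nsmul_eq_mul]
      calc (n:ℝ) * ((n:ℝ) * (1 / (m + 1 : ℝ))) ≤ (n:ℝ) * ((n:ℝ) * 1) := by
            refine mul_le_mul_of_nonneg_left (mul_le_mul_of_nonneg_left h1 (Nat.cast_nonneg n)) (Nat.cast_nonneg n)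
        _ = (n:ℝ)^2 := by ring
    push_cast
    linarith
  -- Bolzano–Weierstrass
  obtain ⟨tstar, htsmem, φ, hφ, hlim⟩ := isCompact_Icc.tendsto_subseq htB
  -- limit of epsilons
  have hεlim : Filter.Tendsto (fun m => 1 / ((φ m : ℝ) + 1)) Filter.atTop (nhds 0) := by
    have h1 : Filter.Tendsto (fun m : ℕ => 1 / ((m : ℝ) + 1)) Filter.atTop (nhds 0) :=
      tendsto_one_div_add_atTop_nhds_zero_nat
    exact h1.comp hφ.tendsto_atTop
  -- continuity of determinant function
  have hF : Continuous (fun p : ℝ × ℝ => (p.1 • (1 : Matrix (Fin n) (Fin n) ℝ) - Mr - p.2 • J).det) := by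
    refine Continuous.matrix_det ?_
    refine continuous_matrix ?_
    intro i j
    simp only [Matrix.sub_apply, Matrix.smul_apply, smul_eq_mul]
    fun_prop
  have hFlim : Filter.Tendsto (fun m => ((t (φ m)) • (1 : Matrix (Fin n) (Fin n) ℝ) - Mr
      - (1 / ((φ m : ℝ) + 1)) • J).det) Filter.atTop
      (nhds ((tstar • (1 : Matrix (Fin n) (Fin n) ℝ) - Mr - (0:ℝ) • J).det)) := by
    have h2 : Filter.Tendsto (fun m => ((t (φ m)), 1 / ((φ m : ℝ) + 1))) Filter.atTop
        (nhds (tstar, 0)) := hlim.prodMk_nhds hεlim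
    exact (hF.tendsto _).comp h2
  have hFzero : ∀ m, ((t (φ m)) • (1 : Matrix (Fin n) (Fin n) ℝ) - Mr
      - (1 / ((φ m : ℝ) + 1)) • J).det = 0 := by
    intro m
    have := htdet (φ m)
    rw [hMm] at this
    convert this using 2
    push_cast
    ext i j
    simp only [Matrix.sub_apply, Matrix.add_apply, Matrix.smul_apply, smul_eq_mul]
    ring
  have hdetstar : (tstar • (1 : Matrix (Fin n) (Fin n) ℝ) - Mr).det = 0 := by
    have h3 : (tstar • (1 : Matrix (Fin n) (Fin n) ℝ) - Mr - (0:ℝ) • J).det = 0 := by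
      have h4 := hFlim
      rw [show (fun m => ((t (φ m)) • (1 : Matrix (Fin n) (Fin n) ℝ) - Mr
          - (1 / ((φ m : ℝ) + 1)) • J).det) = (fun _ : ℕ => (0:ℝ)) from funext hFzero] at h4
      exact tendsto_nhds_unique h4 tendsto_const_nhds
    rw [zero_smul, sub_zero] at h3
    exact h3
  refine ⟨tstar, htsmem.1, ?_, ?_⟩
  · -- tstar is a complex root
    show ((Mr.map (Complex.ofReal : ℝ → ℂ)).charpoly).eval (tstar : ℂ) = 0
    rw [eval_cp']
    have heq : (tstar : ℂ) • (1 : Matrix (Fin n) (Fin n) ℂ) - Mr.map Complex.ofReal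
        = (tstar • (1 : Matrix (Fin n) (Fin n) ℝ) - Mr).map Complex.ofReal := by
      ext i j
      by_cases h : i = j <;>
        simp [h, Matrix.map_apply, Matrix.sub_apply, Matrix.smul_apply, Matrix.one_apply, smul_eq_mul]
    rw [heq]
    show ((tstar • (1 : Matrix (Fin n) (Fin n) ℝ) - Mr).map ⇑(Complex.ofRealHom)).det = 0
    rw [← RingHom.mapMatrix_apply, ← RingHom.map_det, hdetstar, map_zero]
  · -- maximality
    intro z hz
    obtain ⟨u, hu0, hu1, hsub⟩ := subinv_vec hn Mr h0 z hz
    have hzm : ∀ m, Complex.abs z ≤ t m := by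
      intro m
      refine htmax m (Complex.abs z) u hu0 hu1 ?_
      intro i
      refine le_trans (hsub i) ?_
      simp only [hMm, Matrix.add_mulVec, Pi.add_apply, Matrix.smul_mulVec,
        Pi.smul_apply, smul_eq_mul]
      have hJu : (J *ᵥ u) i = ∑ j, u j := by
        simp [hJ, Matrix.mulVec, dotProduct]
      rw [hJu, hu1]
      have : (0:ℝ) < 1 / (m + 1 : ℝ) := by positivity
      linarith
    exact ge_of_tendsto hlim (Filter.Eventually.of_forall (fun m => hzm (φ m)))

lemma numeric_bound (n W : ℕ) (hn : 1 ≤ n) (hW : 1 ≤ W) :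
    (2 * (2 * (n : ℝ)) ^ (n + 2) *
        ((2 * ((⌈Real.sqrt n⌉ : ℤ) : ℝ) * (W : ℝ)) ^ (2 * n) + 1) ^ (2 * n))⁻¹
      ≤ ((((n * n * W : ℕ) : ℝ)) ^ (n * n - 1))⁻¹ := by
  set s : ℝ := ((⌈Real.sqrt n⌉ : ℤ) : ℝ) with hs_def
  set X : ℝ := 2 * s * (W : ℝ) with hX_def
  have hn1 : (1:ℝ) ≤ n := by exact_mod_cast hn
  have hW1 : (1:ℝ) ≤ W := by exact_mod_cast hW
  have hsqrt : Real.sqrt n ≤ s := Int.le_ceil _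
  have hsqrt1 : (1:ℝ) ≤ Real.sqrt n := by
    rw [show (1:ℝ) = Real.sqrt 1 by rw [Real.sqrt_one]]
    exact Real.sqrt_le_sqrt hn1
  have hs1 : (1:ℝ) ≤ s := hsqrt1.trans hsqrt
  have hs2 : (n:ℝ) ≤ s ^ 2 := by
    calc (n:ℝ) = (Real.sqrt n) ^ 2 := (Real.sq_sqrt (by positivity)).symm
      _ ≤ s ^ 2 := by
          refine pow_le_pow_left₀ (Real.sqrt_nonneg _) hsqrt 2
  have hc_eq : (((n * n * W : ℕ) : ℝ)) = (n:ℝ) * n * W := by push_cast; ring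
  have hc1 : (1:ℝ) ≤ (((n * n * W : ℕ) : ℝ)) := by
    rw [hc_eq]; nlinarith
  have hX2 : (2:ℝ) ≤ X := by rw [hX_def]; nlinarith
  have hX0 : (0:ℝ) ≤ X := by linarith
  have hcX : (((n * n * W : ℕ) : ℝ)) ≤ X ^ 4 := by
    rw [hc_eq, hX_def]
    have hW4 : (W:ℝ) ≤ (W:ℝ)^4 := le_self_pow₀ (by linarith) (by norm_num)
    nlinarith [sq_nonneg s, sq_nonneg ((W:ℝ)^2), mul_le_mul hs2 hs2 (by positivity) (by positivity)]
  -- main chain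
  have hchain : (((n * n * W : ℕ) : ℝ)) ^ (n * n - 1)
      ≤ 2 * (2 * (n : ℝ)) ^ (n + 2) * ((X ^ (2 * n) + 1)) ^ (2 * n) := by
    have p1 : (((n * n * W : ℕ) : ℝ)) ^ (n * n - 1) ≤ (((n * n * W : ℕ) : ℝ)) ^ (n * n) :=
      pow_le_pow_right₀ hc1 (Nat.sub_le _ _)
    have p2 : (((n * n * W : ℕ) : ℝ)) ^ (n * n) ≤ (X ^ 4) ^ (n * n) :=
      pow_le_pow_left₀ (by linarith [hc1]) hcX _
    have p3 : (X ^ 4) ^ (n * n) = (X ^ (2 * n)) ^ (2 * n) := by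
      rw [← pow_mul, ← pow_mul]
      congr 1
      ring
    have p4 : (X ^ (2 * n)) ^ (2 * n) ≤ (X ^ (2 * n) + 1) ^ (2 * n) := by
      refine pow_le_pow_left₀ (by positivity) ?_ _
      linarith
    have p5 : (X ^ (2 * n) + 1) ^ (2 * n) ≤ 2 * (2 * (n : ℝ)) ^ (n + 2) * (X ^ (2 * n) + 1) ^ (2 * n) := by
      refine le_mul_of_one_le_left (by positivity) ?_
      have h1 : (1:ℝ) ≤ (2 * (n:ℝ)) ^ (n + 2) := one_le_pow₀ (by linarith)
      linarith
    calc (((n * n * W : ℕ) : ℝ)) ^ (n * n - 1) ≤ (((n * n * W : ℕ) : ℝ)) ^ (n * n) := p1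
      _ ≤ (X ^ 4) ^ (n * n) := p2
      _ = (X ^ (2 * n)) ^ (2 * n) := p3
      _ ≤ (X ^ (2 * n) + 1) ^ (2 * n) := p4
      _ ≤ _ := p5
  have hpos : (0:ℝ) < (((n * n * W : ℕ) : ℝ)) ^ (n * n - 1) := by positivity
  exact inv_anti₀ hpos hchain

lemma sep_core (n W : ℕ) (hn : 1 ≤ n) (hW : 1 ≤ W)
    (A B : Matrix (Fin n) (Fin n) ℕ)
    (hA : ∀ i j, A i j ≤ W) (hB : ∀ i j, B i j ≤ W)
    (lam mu : ℂ)
    (hlam : ((A.map (Nat.cast : ℕ → ℂ)).charpoly).IsRoot lam)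
    (hmu : ((B.map (Nat.cast : ℕ → ℂ)).charpoly).IsRoot mu)
    (hne : lam ≠ mu) :
    ((((n * n * W : ℕ) : ℝ)) ^ (n * n - 1))⁻¹ ≤ Complex.abs (lam - mu) := by
  obtain ⟨Mz, hMzdef, hroot⟩ := kron_root n A B lam mu hlam hmu
  have hWpos : (0:ℝ) < W := by exact_mod_cast hW
  -- entry bound for the complex matrix
  have hZ : ∀ p q, |Mz p q| ≤ (W : ℤ) := by
    intro p q
    rw [hMzdef]
    have h1 := hA p.1 q.1
    have h2 := hB p.2 q.2
    split_ifs <;> simp [abs_le] <;> omega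
  have hentry : ∀ p q, Complex.abs ((Mz.map (Int.castRingHom ℂ)) p q) ≤ (W : ℝ) := by
    intro p q
    rw [Matrix.map_apply]
    show Complex.abs ((Mz p q : ℤ) : ℂ) ≤ (W : ℝ)
    rw [Complex.abs_intCast]
    exact_mod_cast hZ p q
  -- charpoly data
  have hmonic : (Mz.charpoly).Monic := Mz.charpoly_monic
  have hdeg : (Mz.charpoly).natDegree = n * n := by
    rw [Matrix.charpoly_natDegree_eq_dim, Fintype.card_prod, Fintype.card_fin]
  have hc1 : (1:ℝ) ≤ ((n * n * W : ℕ) : ℝ) := by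
    have : 1 ≤ n * n * W := Nat.one_le_iff_ne_zero.2 (by positivity)
    exact_mod_cast this
  have hroots : ∀ w : ℂ, ((Mz.charpoly).map (Int.castRingHom ℂ)).IsRoot w →
      Complex.abs w ≤ ((n * n * W : ℕ) : ℝ) := by
    intro w hw
    rw [← Matrix.charpoly_map] at hw
    have := root_bound (Mz.map (Int.castRingHom ℂ)) (W : ℝ) hentry w hw
    calc Complex.abs w ≤ (Fintype.card (Fin n × Fin n)) * (W:ℝ) := this
      _ = ((n * n * W : ℕ) : ℝ) := by
          rw [Fintype.card_prod, Fintype.card_fin]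
          push_cast; ring
  exact small_root_sep Mz.charpoly hmonic hdeg _ hc1 hroots (lam - mu) hroot
    (sub_ne_zero.2 hne)

/-- If A and B are n×n matrices with natural-number entries
bounded by W (n, W ≥ 1), then any two distinct eigenvalues λ (of A) and μ
(of B) satisfy |λ − μ| ≥ (2(2n)^{n+2}((2⌈√n⌉W)^{2n} + 1)^{2n})⁻¹; in
particular, distinct spectral radii of A and B differ by at least this
quantity. -/
theorem eigenvalue_separation_bound
    (n W : ℕ) (hn : 1 ≤ n) (hW : 1 ≤ W)
    (A B : Matrix (Fin n) (Fin n) ℕ)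
    (hA : ∀ i j, A i j ≤ W) (hB : ∀ i j, B i j ≤ W) :
    (∀ lam mu : ℂ,
      ((A.map (Nat.cast : ℕ → ℂ)).charpoly).IsRoot lam →
      ((B.map (Nat.cast : ℕ → ℂ)).charpoly).IsRoot mu →
      lam ≠ mu →
      (2 * (2 * (n : ℝ)) ^ (n + 2) *
        ((2 * ((⌈Real.sqrt n⌉ : ℤ) : ℝ) * (W : ℝ)) ^ (2 * n) + 1) ^ (2 * n))⁻¹
        ≤ ‖lam - mu‖) ∧
    (∀ rA rB : ℝ,
      rA = sSup {x : ℝ | ∃ z : ℂ,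
        ((A.map (Nat.cast : ℕ → ℂ)).charpoly).IsRoot z ∧ ‖z‖ = x} →
      rB = sSup {x : ℝ | ∃ z : ℂ,
        ((B.map (Nat.cast : ℕ → ℂ)).charpoly).IsRoot z ∧ ‖z‖ = x} →
      rA ≠ rB →
      (2 * (2 * (n : ℝ)) ^ (n + 2) *
        ((2 * ((⌈Real.sqrt n⌉ : ℤ) : ℝ) * (W : ℝ)) ^ (2 * n) + 1) ^ (2 * n))⁻¹
        ≤ |rA - rB|) := by
  have part1 : ∀ lam mu : ℂ,
      ((A.map (Nat.cast : ℕ → ℂ)).charpoly).IsRoot lam →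
      ((B.map (Nat.cast : ℕ → ℂ)).charpoly).IsRoot mu →
      lam ≠ mu →
      (2 * (2 * (n : ℝ)) ^ (n + 2) *
        ((2 * ((⌈Real.sqrt n⌉ : ℤ) : ℝ) * (W : ℝ)) ^ (2 * n) + 1) ^ (2 * n))⁻¹
        ≤ Complex.abs (lam - mu) := by
    intro lam mu hlam hmu hne
    exact le_trans (numeric_bound n W hn hW) (sep_core n W hn hW A B hA hB lam mu hlam hmu hne)
  refine ⟨part1, ?_⟩
  intro rA rB hrA hrB hne
  -- identify the spectral radii as actual roots via Perron-Frobenius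
  have key : ∀ M : Matrix (Fin n) (Fin n) ℕ,
      (sSup {x : ℝ | ∃ z : ℂ, ((M.map (Nat.cast : ℕ → ℂ)).charpoly).IsRoot z ∧ Complex.abs z = x})
        ∈ {x : ℝ | ∃ z : ℂ, ((M.map (Nat.cast : ℕ → ℂ)).charpoly).IsRoot z ∧ Complex.abs z = x}
      ∧ ∃ t : ℝ, 0 ≤ t ∧
        (sSup {x : ℝ | ∃ z : ℂ, ((M.map (Nat.cast : ℕ → ℂ)).charpoly).IsRoot z ∧ Complex.abs z = x}) = t ∧
        ((M.map (Nat.cast : ℕ → ℂ)).charpoly).IsRoot (t : ℂ) := by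
    intro M
    set Mr : Matrix (Fin n) (Fin n) ℝ := M.map (Nat.cast : ℕ → ℝ) with hMr
    have hcast : M.map (Nat.cast : ℕ → ℂ) = Mr.map (Complex.ofReal : ℝ → ℂ) := by
      ext i j
      simp [hMr, Matrix.map_apply]
    obtain ⟨t, ht0, htroot, htmax⟩ := pf_nonneg (by omega : 0 < n) Mr
      (fun i j => by simp [hMr, Matrix.map_apply])
    set S := {x : ℝ | ∃ z : ℂ, ((M.map (Nat.cast : ℕ → ℂ)).charpoly).IsRoot z ∧ Complex.abs z = x}
      with hS
    have htmem : t ∈ S := by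
      refine ⟨(t : ℂ), ?_, ?_⟩
      · rw [hcast]; exact htroot
      · rw [Complex.abs_ofReal, abs_of_nonneg ht0]
    have hub : ∀ x ∈ S, x ≤ t := by
      rintro x ⟨z, hz, rfl⟩
      rw [hcast] at hz
      exact htmax z hz
    have hsup : sSup S = t := le_antisymm (csSup_le ⟨t, htmem⟩ hub) (le_csSup ⟨t, hub⟩ htmem)
    exact ⟨hsup ▸ htmem, t, ht0, hsup, hsup ▸ htroot⟩
  obtain ⟨-, tA, htA0, htAeq, htAroot⟩ := key A
  obtain ⟨-, tB, htB0, htBeq, htBroot⟩ := key B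
  have hrA' : rA = tA := hrA.trans htAeq
  have hrB' : rB = tB := hrB.trans htBeq
  have hne' : (tA : ℂ) ≠ (tB : ℂ) := by
    intro h
    exact hne (by rw [hrA', hrB', Complex.ofReal_inj.1 h])
  have h := part1 (tA : ℂ) (tB : ℂ) htAroot htBroot hne'
  rw [← Complex.ofReal_sub, Complex.abs_ofReal] at h
  rw [hrA', hrB']
  exact h
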